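/- Let Φ_B and Φ_C be the root systems of types B_n and C_n realized in the same vector space ℝⁿ, so that W(Φ_B) = W(Φ_C) = W as subgroups of GL(ℝⁿ). If (w, Φ_C) avoids the type A₃ patterns 3142 and 2413 and the two type B₂ patterns of length two, then (w, Φ_B) also avoids these patterns. -/

import Mathlib

open scoped Classical
open Polynomial
noncomputable section

/-- The ambient Euclidean space `ℝⁿ`. -/
abbrev Esp (n : ℕ) : Type := EuclideanSpace ℝ (Fin n)

/-- The orthogonal reflection in the hyperplane orthogonal to the vector `α`. -/
def rootReflection {n : ℕ} (α : Esp n) : Esp n ≃ₗᵢ[ℝ] Esp n :=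
  Submodule.reflection ((ℝ ∙ α)ᗮ)

/-- A finite crystallographic reduced root system in `ℝⁿ`, together with a chosen
system of positive roots.  (The root system is not required to span `ℝⁿ`, so that
subsystems of a root system are again root systems in the same ambient space.) -/
structure RootSys (n : ℕ) where
  roots : Finset (Esp n)
  pos : Finset (Esp n)
  ne_zero : ∀ α ∈ roots, α ≠ (0 : Esp n)
  neg_mem : ∀ α ∈ roots, -α ∈ roots
  reduced : ∀ α ∈ roots, ∀ t : ℝ, t • α ∈ roots → t = 1 ∨ t = -1
  reflect_mem : ∀ α ∈ roots, ∀ β ∈ roots, rootReflection α β ∈ roots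
  crystal : ∀ α ∈ roots, ∀ β ∈ roots, ∃ k : ℤ, 2 * (inner ℝ α β : ℝ) / (inner ℝ α α : ℝ) = (k : ℝ)
  pos_subset : pos ⊆ roots
  pos_iff : ∀ α ∈ roots, (α ∈ pos ↔ -α ∉ pos)
  pos_add : ∀ α ∈ pos, ∀ β ∈ pos, α + β ∈ roots → α + β ∈ pos

namespace RootSys

variable {n : ℕ}

/-- The Weyl group of a root system: the subgroup of the linear isometries of `ℝⁿ`
generated by the reflections in the roots. -/
def weylGroup (Φ : RootSys n) : Subgroup (Esp n ≃ₗᵢ[ℝ] Esp n) :=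
  Subgroup.closure {g | ∃ α ∈ Φ.roots, g = rootReflection α}

/-- The inversion set `I_Φ(w) = {α ∈ Φ⁺ : w α ∈ -Φ⁺}`. -/
def invSet (Φ : RootSys n) (w : Esp n ≃ₗᵢ[ℝ] Esp n) : Finset (Esp n) :=
  Φ.pos.filter fun α => -(w α) ∈ Φ.pos

/-- The length of a Weyl group element, `ℓ(w) = |I_Φ(w)|`. -/
def len (Φ : RootSys n) (w : Esp n ≃ₗᵢ[ℝ] Esp n) : ℕ :=
  (Φ.invSet w).card

/-- The simple roots: the indecomposable positive roots. -/
def simples (Φ : RootSys n) : Finset (Esp n) :=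
  Φ.pos.filter fun α => ¬ ∃ β ∈ Φ.pos, ∃ γ ∈ Φ.pos, α = β + γ

/-- The root poset order: `α ≤ β` iff `β - α` is a nonnegative linear combination of
the simple roots. -/
def rootLE (Φ : RootSys n) (α β : Esp n) : Prop :=
  ∃ c : Esp n → ℝ, (∀ γ, 0 ≤ c γ) ∧ β - α = ∑ γ ∈ Φ.simples, c γ • γ

/-- The positive roots `β` with `β ≥ α` in the root poset order. -/
def upperRoots (Φ : RootSys n) (α : Esp n) : Finset (Esp n) :=
  Φ.pos.filter fun β => Φ.rootLE α β

/-- `Φ'` is the parabolic root subsystem of `Φ` generated by the subset `Δ'` of the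
simple roots. -/
def IsParabolic (Φ Φ' : RootSys n) (Δ' : Finset (Esp n)) : Prop :=
  Φ'.roots = Φ.roots.filter (fun β => β ∈ Submodule.span ℝ (Δ' : Set (Esp n))) ∧
  Φ'.pos = Φ.pos.filter (fun β => β ∈ Submodule.span ℝ (Δ' : Set (Esp n)))

/-- `u` is the restriction `w|_{Φ'}` of `w` to the subsystem `Φ'` of `Φ`: the unique
element of `W(Φ')` with `I_{Φ'}(u) = I_Φ(w) ∩ (Φ')⁺`. -/
def IsRestriction (Φ' : RootSys n) (u : Esp n ≃ₗᵢ[ℝ] Esp n)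
    (Φ : RootSys n) (w : Esp n ≃ₗᵢ[ℝ] Esp n) : Prop :=
  u ∈ Φ'.weylGroup ∧ Φ'.invSet u = Φ.invSet w ∩ Φ'.pos

/-- A decomposition of `Φ` as an orthogonal direct sum of two nonempty subsystems. -/
def IsOrthDecomp (Φ Φ₁ Φ₂ : RootSys n) : Prop :=
  Φ₁.roots.Nonempty ∧ Φ₂.roots.Nonempty ∧
  (∀ α ∈ Φ₁.roots, ∀ β ∈ Φ₂.roots, (inner ℝ α β : ℝ) = 0) ∧
  Φ.roots = Φ₁.roots ∪ Φ₂.roots ∧ Φ.pos = Φ₁.pos ∪ Φ₂.pos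

/-- Irreducibility of a (nonempty) root system. -/
def IsIrreducible (Φ : RootSys n) : Prop :=
  Φ.roots.Nonempty ∧ ¬ ∃ Φ₁ Φ₂ : RootSys n, Φ.IsOrthDecomp Φ₁ Φ₂

/-- `w₀` is the longest element of `W(Φ)`: the element whose inversion set is all of `Φ⁺`. -/
def IsLongest (Φ : RootSys n) (w₀ : Esp n ≃ₗᵢ[ℝ] Esp n) : Prop :=
  w₀ ∈ Φ.weylGroup ∧ Φ.invSet w₀ = Φ.pos

end RootSys

/-- Separable elements of a Weyl group (Definition 3.1 of the paper):
`w` is separable if `Φ` has rank one; or `Φ` is reducible and the restriction of `w`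
to each part of an orthogonal decomposition is separable; or `Φ` is irreducible and
there is a pivot `α ∈ Δ` such that the restriction of `w` to the parabolic subsystem
generated by `Δ ∖ {α}` is separable and `{β ∈ Φ⁺ : β ≥ α}` is contained in or
disjoint from `I_Φ(w)`. -/
inductive Separable : {n : ℕ} → (Φ : RootSys n) → (Esp n ≃ₗᵢ[ℝ] Esp n) → Prop where
  | rank_one {n : ℕ} (Φ : RootSys n) (w : Esp n ≃ₗᵢ[ℝ] Esp n)
      (hw : w ∈ Φ.weylGroup) (hrk : ∃ α, Φ.pos = {α}) : Separable Φ w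
  | reducible {n : ℕ} (Φ Φ₁ Φ₂ : RootSys n) (w u₁ u₂ : Esp n ≃ₗᵢ[ℝ] Esp n)
      (hw : w ∈ Φ.weylGroup) (hd : Φ.IsOrthDecomp Φ₁ Φ₂)
      (h₁ : Φ₁.IsRestriction u₁ Φ w) (h₂ : Φ₂.IsRestriction u₂ Φ w)
      (s₁ : Separable Φ₁ u₁) (s₂ : Separable Φ₂ u₂) : Separable Φ w
  | pivot {n : ℕ} (Φ Φ' : RootSys n) (w u : Esp n ≃ₗᵢ[ℝ] Esp n) (α : Esp n)
      (hw : w ∈ Φ.weylGroup) (hirr : Φ.IsIrreducible) (hα : α ∈ Φ.simples)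
      (hpar : Φ.IsParabolic Φ' (Φ.simples \ {α}))
      (hres : Φ'.IsRestriction u Φ w) (hsep : Separable Φ' u)
      (hcond : Φ.upperRoots α ⊆ Φ.invSet w ∨ ∀ β ∈ Φ.upperRoots α, β ∉ Φ.invSet w) :
      Separable Φ w

/-- The rank generating polynomial `∑_{i=0}^{N} a_i qⁱ` of a sequence of coefficients. -/
def genPoly (a : ℕ → ℕ) (N : ℕ) : Polynomial ℤ :=
  ∑ i ∈ Finset.range (N + 1), Polynomial.C (a i : ℤ) * Polynomial.X ^ i

/-- A sequence is unimodal (weakly increases, then weakly decreases). -/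
def UnimodalSeq (a : ℕ → ℕ) : Prop :=
  ∃ m : ℕ, (∀ i j, i ≤ j → j ≤ m → a i ≤ a j) ∧ (∀ i j, m ≤ i → i ≤ j → a j ≤ a i)

namespace RootSys

variable {n : ℕ}

/-- The size of the `i`-th rank of the lower order ideal `Λ_w` in left weak order. -/
def lowerRankSize (Φ : RootSys n) (w : Esp n ≃ₗᵢ[ℝ] Esp n) (i : ℕ) : ℕ :=
  Set.ncard {u : Esp n ≃ₗᵢ[ℝ] Esp n |
    u ∈ Φ.weylGroup ∧ Φ.invSet u ⊆ Φ.invSet w ∧ Φ.len u = i}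

/-- The size of the `i`-th rank of the upper order ideal `V_w` in left weak order
(graded by `ℓ(u) - ℓ(w)`). -/
def upperRankSize (Φ : RootSys n) (w : Esp n ≃ₗᵢ[ℝ] Esp n) (i : ℕ) : ℕ :=
  Set.ncard {u : Esp n ≃ₗᵢ[ℝ] Esp n |
    u ∈ Φ.weylGroup ∧ Φ.invSet w ⊆ Φ.invSet u ∧ Φ.len u = Φ.len w + i}

/-- The number of elements of the Weyl group of length `i`. -/
def weylRankSize (Φ : RootSys n) (i : ℕ) : ℕ :=
  Set.ncard {u : Esp n ≃ₗᵢ[ℝ] Esp n | u ∈ Φ.weylGroup ∧ Φ.len u = i}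

end RootSys

namespace RootSys

variable {n : ℕ}

/-- `(w, Φ)` contains one of the type `A₃` patterns `3142` or `2413`: there is a
subsystem `Φ ∩ U` of type `A₃` with simple roots `a, b, c` (in this order) on which
the inversion set of `w` restricts to the inversion set of `3142` (namely
`{a, c, a+b+c}`) or of `2413` (namely `{b, a+b, b+c}`). -/
def ContainsA3Pattern (Φ : RootSys n) (w : Esp n ≃ₗᵢ[ℝ] Esp n) : Prop :=
  ∃ (U : Submodule ℝ (Esp n)) (a b c : Esp n),
    LinearIndependent ℝ ![a, b, c] ∧
    Φ.pos.filter (fun β => β ∈ U) = ({a, b, c, a + b, b + c, a + b + c} : Finset (Esp n)) ∧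
    ((Φ.invSet w).filter (fun β => β ∈ U) = ({b, a + b, b + c} : Finset (Esp n)) ∨
      (Φ.invSet w).filter (fun β => β ∈ U) = ({a, c, a + b + c} : Finset (Esp n)))

/-- `(w, Φ)` contains one of the two type `B₂` patterns whose inversion sets have
size two: there is a subsystem `Φ ∩ U` of type `B₂` on which the inversion set of
`w` restricts to a set of size two. -/
def ContainsB2Pattern (Φ : RootSys n) (w : Esp n ≃ₗᵢ[ℝ] Esp n) : Prop :=
  ∃ (U : Submodule ℝ (Esp n)) (p q : Esp n),
    LinearIndependent ℝ ![p, q] ∧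
    Φ.pos.filter (fun β => β ∈ U) = ({p, q, p + q, p + 2 • q} : Finset (Esp n)) ∧
    ((Φ.invSet w).filter (fun β => β ∈ U)).card = 2

/-- `(w, Φ)` contains one of the six type `G₂` patterns whose inversion sets have
sizes two, three, or four. -/
def ContainsG2Pattern (Φ : RootSys n) (w : Esp n ≃ₗᵢ[ℝ] Esp n) : Prop :=
  ∃ (U : Submodule ℝ (Esp n)) (p q : Esp n),
    LinearIndependent ℝ ![p, q] ∧
    Φ.pos.filter (fun β => β ∈ U) =
      ({p, q, p + q, p + 2 • q, p + 3 • q, 2 • p + 3 • q} : Finset (Esp n)) ∧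
    ((Φ.invSet w).filter (fun β => β ∈ U)).card ∈ ({2, 3, 4} : Set ℕ)

/-- A positive root is *small* if all its coefficients on the simple roots are `0` or `1`. -/
def IsSmall (Φ : RootSys n) (β : Esp n) : Prop :=
  ∃ c : Esp n → ℝ, β = ∑ γ ∈ Φ.simples, c γ • γ ∧ ∀ γ ∈ Φ.simples, c γ = 0 ∨ c γ = 1

/-- The support of `β` (written `β = ∑ c γ • γ` over the simple roots) contains the
simple root `t`. -/
def SuppContains (Φ : RootSys n) (t β : Esp n) : Prop :=
  ∃ c : Esp n → ℝ, β = ∑ γ ∈ Φ.simples, c γ • γ ∧ c t ≠ 0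

/-- The parabolic subgroup `W_J` generated by the reflections in the roots of `J`. -/
def parabolicSubgroup (J : Finset (Esp n)) : Subgroup (Esp n ≃ₗᵢ[ℝ] Esp n) :=
  Subgroup.closure {g | ∃ α ∈ J, g = rootReflection α}

/-- `w` is a minimal-length coset representative of `w W_J`, i.e. `w ∈ W^J`. -/
def IsMinCosetRep (Φ : RootSys n) (J : Finset (Esp n)) (w : Esp n ≃ₗᵢ[ℝ] Esp n) : Prop :=
  w ∈ Φ.weylGroup ∧ ∀ u ∈ parabolicSubgroup (n := n) J, Φ.len w ≤ Φ.len (w * u)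

/-- Biconvexity of a subset `A` of a set `P` of positive roots. -/
def IsBiconvexIn (P A : Finset (Esp n)) : Prop :=
  A ⊆ P ∧ (∀ a ∈ A, ∀ b ∈ A, a + b ∈ P → a + b ∈ A) ∧
    (∀ a ∈ P, ∀ b ∈ P, a ∉ A → b ∉ A → a + b ∈ P → a + b ∉ A)

/-- The number of elements of `W(Φ)` of length `ℓ(w') + i` restricting to `w'` on the
subsystem `Φ'`. -/
def fiberRankSize (Φ Φ' : RootSys n) (w' : Esp n ≃ₗᵢ[ℝ] Esp n) (i : ℕ) : ℕ :=
  Set.ncard {w : Esp n ≃ₗᵢ[ℝ] Esp n |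
    w ∈ Φ.weylGroup ∧ Φ'.IsRestriction w' Φ w ∧ Φ.len w = Φ'.len w' + i}

end RootSys

/-- Isomorphism of patterns: a linear map carrying the roots, positive roots, and the
inversion set of the one pattern bijectively onto those of the other. -/
def PatternIso {m k : ℕ} (Ψ : RootSys m) (u : Esp m ≃ₗᵢ[ℝ] Esp m)
    (Ψ' : RootSys k) (u' : Esp k ≃ₗᵢ[ℝ] Esp k) : Prop :=
  ∃ f : Esp m →ₗ[ℝ] Esp k,
    Set.InjOn f (Ψ.roots : Set (Esp m)) ∧
    Ψ.roots.image ⇑f = Ψ'.roots ∧ Ψ.pos.image ⇑f = Ψ'.pos ∧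
    (Ψ.invSet u).image ⇑f = Ψ'.invSet u'

/-- `(w, Φ)` contains a pattern isomorphic to `(u, Ψ)`: there is a subsystem
`Φ ∩ U` of `Φ` on which `w` restricts to an element whose pattern is isomorphic
to `(u, Ψ)`. -/
def ContainsPatternGen {m k : ℕ} (Φ : RootSys m) (w : Esp m ≃ₗᵢ[ℝ] Esp m)
    (Ψ : RootSys k) (u : Esp k ≃ₗᵢ[ℝ] Esp k) : Prop :=
  ∃ (U : Submodule ℝ (Esp m)) (Ψ₀ : RootSys m) (u₀ : Esp m ≃ₗᵢ[ℝ] Esp m),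
    Ψ₀.roots = Φ.roots.filter (fun β => β ∈ U) ∧
    Ψ₀.pos = Φ.pos.filter (fun β => β ∈ U) ∧
    u₀ ∈ Ψ₀.weylGroup ∧ Ψ₀.invSet u₀ = (Φ.invSet w).filter (fun β => β ∈ U) ∧
    PatternIso Ψ₀ u₀ Ψ u

/-- The `i`-th standard basis vector of `ℝⁿ`. -/
def stdB (n : ℕ) (i : Fin n) : Esp n := EuclideanSpace.single i (1 : ℝ)

/-- The `i`-th simple root of the type `Bₙ` root system: `eᵢ - eᵢ₊₁` for `i < n-1`
and `eₙ₋₁` (the last standard basis vector) for `i = n-1`. -/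
def bSimple (n : ℕ) (i : Fin n) : Esp n :=
  stdB n i - (if h : (i : ℕ) + 1 < n then stdB n ⟨(i : ℕ) + 1, h⟩ else 0)

/-- The set of positive roots of the type `Bₙ` root system. -/
def typeBPos (n : ℕ) : Set (Esp n) :=
  {v | ∃ i j : Fin n, i < j ∧ (v = stdB n i - stdB n j ∨ v = stdB n i + stdB n j)} ∪
    {v | ∃ i : Fin n, v = stdB n i}

/-- The set of positive roots of the type `Cₙ` root system. -/
def typeCPos (n : ℕ) : Set (Esp n) :=
  {v | ∃ i j : Fin n, i < j ∧ (v = stdB n i - stdB n j ∨ v = stdB n i + stdB n j)} ∪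
    {v | ∃ i : Fin n, v = 2 • stdB n i}

/-- The set of positive roots of the type `Aₙ` root system (in `ℝⁿ⁺¹`). -/
def typeAPos (n : ℕ) : Set (Esp (n + 1)) :=
  {v | ∃ i j : Fin (n + 1), i < j ∧ v = stdB (n + 1) i - stdB (n + 1) j}

-- ======== auxiliary lemmas ========

section Aux

lemma inner_stdB {n : ℕ} (i j : Fin n) :
    (inner ℝ (stdB n i) (stdB n j) : ℝ) = if i = j then 1 else 0 := by
  simp [stdB, EuclideanSpace.inner_single_left, EuclideanSpace.single_apply]

lemma B_cases {n : ℕ} {v : Esp n} (hv : v ∈ typeBPos n) :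
    ((inner ℝ v v : ℝ) = 2 ∧ v ∈ typeCPos n) ∨ ((inner ℝ v v : ℝ) = 1 ∧ ∃ i, v = stdB n i) := by
  rcases hv with ⟨i, j, hij, h | h⟩ | ⟨i, h⟩
  · left
    refine ⟨?_, Or.inl ⟨i, j, hij, Or.inl h⟩⟩
    subst h
    simp only [inner_sub_left, inner_sub_right, inner_stdB]
    simp [hij.ne, hij.ne']; norm_num
  · left
    refine ⟨?_, Or.inl ⟨i, j, hij, Or.inr h⟩⟩
    subst h
    simp only [inner_add_left, inner_add_right, inner_stdB]
    simp [hij.ne, hij.ne']; norm_num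
  · right
    subst h
    exact ⟨by rw [inner_stdB, if_pos rfl], i, rfl⟩

lemma C_cases {n : ℕ} {v : Esp n} (hv : v ∈ typeCPos n) :
    ((inner ℝ v v : ℝ) = 2 ∧ v ∈ typeBPos n) ∨ ((inner ℝ v v : ℝ) = 4 ∧ ∃ i, v = 2 • stdB n i) := by
  rcases hv with ⟨i, j, hij, h | h⟩ | ⟨i, h⟩
  · left
    refine ⟨?_, Or.inl ⟨i, j, hij, Or.inl h⟩⟩
    subst h
    simp only [inner_sub_left, inner_sub_right, inner_stdB]
    simp [hij.ne, hij.ne']; norm_num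
  · left
    refine ⟨?_, Or.inl ⟨i, j, hij, Or.inr h⟩⟩
    subst h
    simp only [inner_add_left, inner_add_right, inner_stdB]
    simp [hij.ne, hij.ne']; norm_num
  · right
    subst h
    refine ⟨?_, i, rfl⟩
    rw [two_smul]
    simp only [inner_add_left, inner_add_right, inner_stdB]
    norm_num

lemma normB {n : ℕ} {v : Esp n} (hv : v ∈ typeBPos n) :
    (inner ℝ v v : ℝ) = 1 ∨ (inner ℝ v v : ℝ) = 2 := by
  rcases B_cases hv with ⟨h, _⟩ | ⟨h, _⟩
  exacts [Or.inr h, Or.inl h]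

lemma L1 {n : ℕ} {v : Esp n} (h2 : (inner ℝ v v : ℝ) = 2) :
    v ∈ typeBPos n ↔ v ∈ typeCPos n := by
  constructor
  · intro hv
    rcases B_cases hv with ⟨_, h⟩ | ⟨h1, _⟩
    · exact h
    · rw [h2] at h1; norm_num at h1
  · intro hv
    rcases C_cases hv with ⟨_, h⟩ | ⟨h1, _⟩
    · exact h
    · rw [h2] at h1; norm_num at h1

lemma L2 {n : ℕ} {v : Esp n} (h1 : (inner ℝ v v : ℝ) = 1) :
    v ∈ typeBPos n ↔ (2 : ℕ) • v ∈ typeCPos n := by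
  constructor
  · intro hv
    rcases B_cases hv with ⟨h2, _⟩ | ⟨_, i, rfl⟩
    · rw [h1] at h2; norm_num at h2
    · exact Or.inr ⟨i, rfl⟩
  · intro hv
    rcases C_cases hv with ⟨h2, _⟩ | ⟨_, i, hv'⟩
    · rw [two_smul] at h2
      simp only [inner_add_left, inner_add_right, h1] at h2
      norm_num at h2
    · have : v = stdB n i := by
        have h' : (2:ℝ) • v = (2:ℝ) • stdB n i := by
          rw [two_smul, two_smul]
          rw [two_smul, two_smul] at hv'
          exact hv'
        exact smul_right_injective _ (by norm_num) h'
      exact Or.inr ⟨i, this⟩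

lemma SP {n : ℕ} {v w : Esp n} (hv : v ∈ typeBPos n) (hw : w ∈ typeBPos n)
    (h1 : (inner ℝ v v : ℝ) = 1) (h1' : (inner ℝ w w : ℝ) = 1) (hne : v ≠ w) :
    v + w ∈ typeBPos n ∧ (v - w ∈ typeBPos n ∨ w - v ∈ typeBPos n) := by
  rcases B_cases hv with ⟨h2, _⟩ | ⟨_, i, rfl⟩
  · rw [h1] at h2; norm_num at h2
  rcases B_cases hw with ⟨h2, _⟩ | ⟨_, j, rfl⟩
  · rw [h1'] at h2; norm_num at h2
  have hij : i ≠ j := fun h => hne (by rw [h])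
  rcases hij.lt_or_gt with h | h
  · exact ⟨Or.inl ⟨i, j, h, Or.inr rfl⟩, Or.inl (Or.inl ⟨i, j, h, Or.inl rfl⟩)⟩
  · exact ⟨Or.inl ⟨j, i, h, Or.inr (add_comm _ _)⟩, Or.inr (Or.inl ⟨j, i, h, Or.inl rfl⟩)⟩

lemma B_repr {n : ℕ} {v : Esp n} (hv : v ∈ typeBPos n) :
    ∃ (i j : Fin n) (σ τ : ℤ), v = (σ : ℝ) • stdB n i + (τ : ℝ) • stdB n j := by
  rcases hv with ⟨i, j, _, rfl | rfl⟩ | ⟨i, rfl⟩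
  · exact ⟨i, j, 1, -1, by push_cast; module⟩
  · exact ⟨i, j, 1, 1, by push_cast; module⟩
  · exact ⟨i, i, 1, 0, by push_cast; module⟩

lemma exists_int_inner {n : ℕ} {v w : Esp n} (hv : v ∈ typeBPos n) (hw : w ∈ typeBPos n) :
    ∃ k : ℤ, (inner ℝ v w : ℝ) = (k : ℝ) := by
  obtain ⟨i, j, s, t, rfl⟩ := B_repr hv
  obtain ⟨k, l, s', t', rfl⟩ := B_repr hw
  refine ⟨s * s' * (if i = k then 1 else 0) + s * t' * (if i = l then 1 else 0)
      + t * s' * (if j = k then 1 else 0) + t * t' * (if j = l then 1 else 0), ?_⟩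
  simp only [inner_add_left, inner_add_right, real_inner_smul_left, real_inner_smul_right,
    inner_stdB]
  push_cast [apply_ite (fun x : ℤ => (x : ℝ))]
  ring

lemma strictCS {n : ℕ} {v w : Esp n}
    (hind : ∀ α β : ℝ, α • v + β • w = 0 → α = 0 ∧ β = 0) :
    (inner ℝ v w : ℝ) ^ 2 < (inner ℝ v v : ℝ) * (inner ℝ w w : ℝ) := by
  have hv0 : v ≠ 0 := fun h => one_ne_zero (hind 1 0 (by simp [h])).1
  have h1 : (inner ℝ v w : ℝ) < ‖v‖ * ‖w‖ := by
    rw [inner_lt_norm_mul_iff_real]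
    intro h
    have h0 : ‖w‖ • v + (-‖v‖) • w = 0 := by rw [neg_smul, h]; abel
    have := hind _ _ h0
    exact hv0 (norm_eq_zero.mp (by simpa using this.2))
  have h2 : -(inner ℝ v w : ℝ) < ‖v‖ * ‖w‖ := by
    have h3 := @inner_lt_norm_mul_iff_real _ _ _ v (-w)
    rw [inner_neg_right, norm_neg] at h3
    rw [h3]
    intro h
    have h0 : ‖w‖ • v + ‖v‖ • w = 0 := by
      rw [smul_neg] at h
      rw [h]; abel
    have := hind _ _ h0
    exact hv0 (norm_eq_zero.mp (by simpa using this.2))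
  have e1 : (inner ℝ v v : ℝ) = ‖v‖ * ‖v‖ := real_inner_self_eq_norm_mul_norm v
  have e2 : (inner ℝ w w : ℝ) = ‖w‖ * ‖w‖ := real_inner_self_eq_norm_mul_norm w
  rw [e1, e2]
  nlinarith [norm_nonneg v, norm_nonneg w]

lemma f_inj {n : ℕ} {x y : Esp n} (hx : x ∈ typeBPos n) (hy : y ∈ typeBPos n)
    (hxy : (if (inner ℝ x x : ℝ) = 1 then x + x else x)
      = (if (inner ℝ y y : ℝ) = 1 then y + y else y)) : x = y := by
  have n4 : ∀ z : Esp n, (inner ℝ (z + z) (z + z) : ℝ) = 4 * (inner ℝ z z : ℝ) := by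
    intro z; rw [real_inner_add_add_self]; ring
  rcases normB hx with h1 | h1 <;> rcases normB hy with h2 | h2
  · rw [if_pos h1, if_pos h2] at hxy
    have h' : (2:ℝ) • x = (2:ℝ) • y := by rw [two_smul, two_smul]; exact hxy
    exact smul_right_injective _ (by norm_num) h'
  · rw [if_pos h1, if_neg (by rw [h2]; norm_num)] at hxy
    have := n4 x
    rw [hxy, h1, h2] at this
    norm_num at this
  · rw [if_neg (by rw [h1]; norm_num), if_pos h2] at hxy
    have := n4 y
    rw [← hxy, h1, h2] at this
    norm_num at this
  · rwa [if_neg (by rw [h1]; norm_num), if_neg (by rw [h2]; norm_num)] at hxy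

set_option maxHeartbeats 1000000 in
lemma numericZ2 (X Y S : ℤ) (hx : X = 1 ∨ X = 2) (hy : Y = 1 ∨ Y = 2)
    (hpq : X + Y + 2*S = 1 ∨ X + Y + 2*S = 2)
    (hp2q : X + 4*S + 4*Y = 1 ∨ X + 4*S + 4*Y = 2)
    (cs : S*S < X*Y) : X = 2 ∧ Y = 1 ∧ S = -1 := by
  have hxy : X*Y ≤ 4 := by rcases hx with rfl|rfl <;> rcases hy with rfl|rfl <;> norm_num
  have h1 : -2 ≤ S := by nlinarith [sq_nonneg (S+2)]
  have h2 : S ≤ 2 := by nlinarith [sq_nonneg (S-2)]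
  rcases hx with rfl | rfl <;> rcases hy with rfl | rfl <;> interval_cases S <;> omega

set_option maxHeartbeats 4000000 in
lemma numericZ3 (X Y Z S T U : ℤ) (hx : X = 1 ∨ X = 2) (hy : Y = 1 ∨ Y = 2) (hz : Z = 1 ∨ Z = 2)
    (hab : X + Y + 2*S = 1 ∨ X + Y + 2*S = 2)
    (hbc : Y + Z + 2*T = 1 ∨ Y + Z + 2*T = 2)
    (habc : X + Y + Z + 2*(S + T + U) = 1 ∨ X + Y + Z + 2*(S + T + U) = 2)
    (cs1 : S*S < X*Y) (cs2 : T*T < Y*Z) (cs3 : U*U < X*Z) :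
    (X = 2 ∧ Y = 2 ∧ Z = 2 ∧ X + Y + 2*S = 2 ∧ Y + Z + 2*T = 2 ∧
        X + Y + Z + 2*(S + T + U) = 2)
      ∨ (X = 1 ∧ Y = 1) ∨ (X = 1 ∧ X + Y + 2*S = 1) ∨ (Y = 1 ∧ Z = 1)
      ∨ (Y = 1 ∧ X + Y + 2*S = 1) ∨ (Z = 1 ∧ Y + Z + 2*T = 1) := by
  have hxy : X*Y ≤ 4 := by rcases hx with rfl|rfl <;> rcases hy with rfl|rfl <;> norm_num
  have hyz : Y*Z ≤ 4 := by rcases hy with rfl|rfl <;> rcases hz with rfl|rfl <;> norm_num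
  have hxz : X*Z ≤ 4 := by rcases hx with rfl|rfl <;> rcases hz with rfl|rfl <;> norm_num
  have hs1 : -2 ≤ S := by nlinarith [sq_nonneg (S+2)]
  have hs2 : S ≤ 2 := by nlinarith [sq_nonneg (S-2)]
  have ht1 : -2 ≤ T := by nlinarith [sq_nonneg (T+2)]
  have ht2 : T ≤ 2 := by nlinarith [sq_nonneg (T-2)]
  have hu1 : -2 ≤ U := by nlinarith [sq_nonneg (U+2)]
  have hu2 : U ≤ 2 := by nlinarith [sq_nonneg (U-2)]
  rcases hx with rfl | rfl <;> rcases hy with rfl | rfl <;> rcases hz with rfl | rfl <;>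
    interval_cases S <;> interval_cases T <;> interval_cases U <;> omega

end Aux
-- B2 transfer
lemma B2_transfer {n : ℕ} (ΦB ΦC : RootSys n)
    (hBpos : (ΦB.pos : Set (Esp n)) = typeBPos n)
    (hCpos : (ΦC.pos : Set (Esp n)) = typeCPos n)
    (w : Esp n ≃ₗᵢ[ℝ] Esp n)
    (h : ΦB.ContainsB2Pattern w) : ΦC.ContainsB2Pattern w := by
  obtain ⟨U, p, q, hind, hfil, hcard⟩ := h
  have hB : ∀ v : Esp n, v ∈ ΦB.pos ↔ v ∈ typeBPos n := fun v => by
    rw [← Finset.mem_coe, hBpos]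
  have hC : ∀ v : Esp n, v ∈ ΦC.pos ↔ v ∈ typeCPos n := fun v => by
    rw [← Finset.mem_coe, hCpos]
  have hmem : ∀ v : Esp n, v ∈ ΦB.pos ∧ v ∈ U ↔
      (v = p ∨ v = q ∨ v = p + q ∨ v = p + 2 • q) := by
    intro v
    constructor
    · rintro ⟨h1, h2⟩
      have hv : v ∈ ΦB.pos.filter (fun β => β ∈ U) := Finset.mem_filter.mpr ⟨h1, h2⟩
      rw [hfil] at hv
      simpa using hv
    · intro hv
      have hv' : v ∈ ΦB.pos.filter (fun β => β ∈ U) := by rw [hfil]; simpa using hv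
      exact ⟨(Finset.mem_filter.mp hv').1, (Finset.mem_filter.mp hv').2⟩
  have hzero : ∀ α β : ℝ, α • p + β • q = 0 → α = 0 ∧ β = 0 := by
    intro α β h0
    have h1 := Fintype.linearIndependent_iff.mp hind ![α, β] (by simpa [Fin.sum_univ_two] using h0)
    exact ⟨h1 0, h1 1⟩
  obtain ⟨hpB, hpU⟩ := (hmem p).mpr (Or.inl rfl)
  obtain ⟨hqB, hqU⟩ := (hmem q).mpr (Or.inr (Or.inl rfl))
  obtain ⟨hpqB, hpqU⟩ := (hmem _).mpr (Or.inr (Or.inr (Or.inl rfl)))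
  obtain ⟨hp2qB, hp2qU⟩ := (hmem _).mpr (Or.inr (Or.inr (Or.inr rfl)))
  have hp : p ∈ typeBPos n := (hB p).mp hpB
  have hq : q ∈ typeBPos n := (hB q).mp hqB
  have hpq : p + q ∈ typeBPos n := (hB _).mp hpqB
  have hp2q : p + 2 • q ∈ typeBPos n := (hB _).mp hp2qB
  obtain ⟨X, hX⟩ := exists_int_inner hp hp
  obtain ⟨Y, hY⟩ := exists_int_inner hq hq
  obtain ⟨S, hS⟩ := exists_int_inner hp hq
  have hxd : X = 1 ∨ X = 2 := by
    rcases normB hp with h1 | h1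
    · left; exact_mod_cast hX ▸ h1
    · right; exact_mod_cast hX ▸ h1
  have hyd : Y = 1 ∨ Y = 2 := by
    rcases normB hq with h1 | h1
    · left; exact_mod_cast hY ▸ h1
    · right; exact_mod_cast hY ▸ h1
  have eNpq : (inner ℝ (p + q) (p + q) : ℝ) = (X : ℝ) + 2 * S + Y := by
    rw [real_inner_add_add_self, hX, hS, hY]
  have e2q : p + 2 • q = (p + q) + q := by rw [two_nsmul]; abel
  have eNp2q : (inner ℝ (p + 2 • q) (p + 2 • q) : ℝ) = (X : ℝ) + 4 * S + 4 * Y := by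
    rw [e2q, real_inner_add_add_self, eNpq, inner_add_left, hS, hY]
    ring
  have ipqd : X + Y + 2 * S = 1 ∨ X + Y + 2 * S = 2 := by
    rcases normB hpq with h1 | h1 <;> rw [eNpq] at h1
    · left; have : (X : ℝ) + Y + 2 * S = 1 := by linarith
      exact_mod_cast this
    · right; have : (X : ℝ) + Y + 2 * S = 2 := by linarith
      exact_mod_cast this
  have ip2qd : X + 4 * S + 4 * Y = 1 ∨ X + 4 * S + 4 * Y = 2 := by
    rcases normB hp2q with h1 | h1 <;> rw [eNp2q] at h1
    · left; exact_mod_cast h1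
    · right; exact_mod_cast h1
  have csZ : S * S < X * Y := by
    have hcs := strictCS hzero
    rw [hX, hS, hY, sq] at hcs
    exact_mod_cast hcs
  obtain ⟨hX2, hY1, hSm1⟩ := numericZ2 X Y S hxd hyd ipqd ip2qd csZ
  have npp : (inner ℝ p p : ℝ) = 2 := by rw [hX, hX2]; norm_num
  have nqq : (inner ℝ q q : ℝ) = 1 := by rw [hY, hY1]; norm_num
  have npq1 : (inner ℝ (p + q) (p + q) : ℝ) = 1 := by
    rw [eNpq, hX2, hY1, hSm1]; norm_num
  have np2q2 : (inner ℝ (p + 2 • q) (p + 2 • q) : ℝ) = 2 := by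
    rw [eNp2q, hX2, hY1, hSm1]; norm_num
  have nwnorm : ∀ v : Esp n, (inner ℝ (-(w v)) (-(w v)) : ℝ) = (inner ℝ v v : ℝ) := by
    intro v
    rw [inner_neg_neg, LinearIsometryEquiv.inner_map_map]
  have hCfil : ΦC.pos.filter (fun β => β ∈ U) =
      ({2 • q, p, 2 • q + p, 2 • q + 2 • p} : Finset (Esp n)) := by
    apply Finset.ext
    intro v
    simp only [Finset.mem_filter, Finset.mem_insert, Finset.mem_singleton]
    constructor
    · rintro ⟨hvC, hvU⟩
      rcases C_cases ((hC v).mp hvC) with ⟨h2, hvB⟩ | ⟨h4, i, hvi⟩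
      · rcases (hmem v).mp ⟨(hB v).mpr hvB, hvU⟩ with hv | hv | hv | hv
        · right; left; exact hv
        · rw [hv, nqq] at h2; norm_num at h2
        · rw [hv, npq1] at h2; norm_num at h2
        · right; right; left; rw [hv, add_comm]
      · have hv2 : v = (2:ℝ) • stdB n i := by rw [hvi, two_nsmul]; module
        have hiU : stdB n i ∈ U := by
          have hmm := U.smul_mem ((2:ℝ)⁻¹) hvU
          rw [hv2, smul_smul] at hmm
          norm_num at hmm
          exact hmm
        have hiB : stdB n i ∈ ΦB.pos := (hB _).mpr (Or.inr ⟨i, rfl⟩)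
        have hni : (inner ℝ (stdB n i) (stdB n i) : ℝ) = 1 := by rw [inner_stdB, if_pos rfl]
        rcases (hmem _).mp ⟨hiB, hiU⟩ with he | he | he | he
        · rw [he, npp] at hni; norm_num at hni
        · left; rw [hvi, he]
        · right; right; right
          rw [hvi, he, two_nsmul, two_nsmul, two_nsmul]
          abel
        · rw [he, np2q2] at hni; norm_num at hni
    · rintro (hv | hv | hv | hv) <;> rw [hv]
      · refine ⟨(hC _).mpr ((L2 nqq).mp hq), ?_⟩
        rw [two_nsmul]; exact U.add_mem hqU hqU
      · exact ⟨(hC _).mpr ((L1 npp).mp hp), hpU⟩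
      · refine ⟨?_, ?_⟩
        · rw [add_comm]; exact (hC _).mpr ((L1 np2q2).mp hp2q)
        · rw [two_nsmul]; exact U.add_mem (U.add_mem hqU hqU) hpU
      · refine ⟨?_, ?_⟩
        · have h1 : (2:ℕ) • q + 2 • p = (2:ℕ) • (p + q) := by
            rw [two_nsmul, two_nsmul, two_nsmul]; abel
          rw [h1]; exact (hC _).mpr ((L2 npq1).mp hpq)
        · rw [two_nsmul, two_nsmul]
          exact U.add_mem (U.add_mem hqU hqU) (U.add_mem hpU hpU)
  refine ⟨U, 2 • q, p, ?_, hCfil, ?_⟩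
  · rw [Fintype.linearIndependent_iff]
    intro g hg
    simp only [Fin.sum_univ_two, Matrix.cons_val_zero, Matrix.cons_val_one, Matrix.head_cons] at hg
    have hg' : g 1 • p + (2 * g 0) • q = 0 := by
      rw [two_nsmul] at hg
      linear_combination (norm := module) hg
    obtain ⟨h1, h2⟩ := hzero _ _ hg'
    intro i
    fin_cases i
    · exact (by linarith : g 0 = 0)
    · exact h1
  · have himg : (ΦC.invSet w).filter (fun β => β ∈ U) =
        ((ΦB.invSet w).filter (fun β => β ∈ U)).image
          (fun v => if (inner ℝ v v : ℝ) = 1 then v + v else v) := by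
      apply Finset.ext
      intro v
      constructor
      · intro hvF
        obtain ⟨hvI, hvU⟩ := Finset.mem_filter.mp hvF
        obtain ⟨hvC, hwv⟩ := Finset.mem_filter.mp hvI
        have hv4 : v ∈ ΦC.pos.filter (fun β => β ∈ U) := Finset.mem_filter.mpr ⟨hvC, hvU⟩
        rw [hCfil] at hv4
        simp only [Finset.mem_insert, Finset.mem_singleton] at hv4
        have hwvC : -(w v) ∈ typeCPos n := (hC _).mp hwv
        rw [Finset.mem_image]
        rcases hv4 with hv | hv | hv | hv
        · -- v = 2 • q
          rw [hv] at hwvC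
          have e1 : -(w ((2:ℕ) • q)) = (2:ℕ) • (-(w q)) := by
            rw [two_nsmul, two_nsmul, map_add]; abel
          rw [e1] at hwvC
          have hqinv : -(w q) ∈ typeBPos n := (L2 (by rw [nwnorm, nqq])).mpr hwvC
          refine ⟨q, Finset.mem_filter.mpr ⟨Finset.mem_filter.mpr
            ⟨hqB, (hB _).mpr hqinv⟩, hqU⟩, ?_⟩
          rw [if_pos nqq, hv, two_nsmul]
        · -- v = p
          rw [hv] at hwvC
          have hpinv : -(w p) ∈ typeBPos n := (L1 (by rw [nwnorm, npp])).mpr hwvC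
          refine ⟨p, Finset.mem_filter.mpr ⟨Finset.mem_filter.mpr
            ⟨hpB, (hB _).mpr hpinv⟩, hpU⟩, ?_⟩
          rw [if_neg (by rw [npp]; norm_num), hv]
        · -- v = 2 • q + p = p + 2 • q
          have e0 : (2:ℕ) • q + p = p + 2 • q := add_comm _ _
          rw [hv, e0] at hwvC
          have hinv : -(w (p + 2 • q)) ∈ typeBPos n := (L1 (by rw [nwnorm, np2q2])).mpr hwvC
          refine ⟨p + 2 • q, Finset.mem_filter.mpr ⟨Finset.mem_filter.mpr
            ⟨hp2qB, (hB _).mpr hinv⟩, hp2qU⟩, ?_⟩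
          rw [if_neg (by rw [np2q2]; norm_num), hv, e0]
        · -- v = 2 • q + 2 • p = 2 • (p + q)
          have e0 : (2:ℕ) • q + (2:ℕ) • p = (2:ℕ) • (p + q) := by
            rw [two_nsmul, two_nsmul, two_nsmul]; abel
          rw [hv, e0] at hwvC
          have e1 : -(w ((2:ℕ) • (p + q))) = (2:ℕ) • (-(w (p + q))) := by
            rw [two_nsmul, two_nsmul, map_add]; abel
          rw [e1] at hwvC
          have hinv : -(w (p + q)) ∈ typeBPos n := (L2 (by rw [nwnorm, npq1])).mpr hwvC
          refine ⟨p + q, Finset.mem_filter.mpr ⟨Finset.mem_filter.mpr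
            ⟨hpqB, (hB _).mpr hinv⟩, hpqU⟩, ?_⟩
          rw [if_pos npq1, hv, e0, two_nsmul]
      · intro hvI
        rw [Finset.mem_image] at hvI
        obtain ⟨β, hβF, rfl⟩ := hvI
        obtain ⟨hβI, hβU⟩ := Finset.mem_filter.mp hβF
        obtain ⟨hβB, hwβ⟩ := Finset.mem_filter.mp hβI
        have hwβB : -(w β) ∈ typeBPos n := (hB _).mp hwβ
        rcases (hmem β).mp ⟨hβB, hβU⟩ with hb | hb | hb | hb <;> rw [hb] at hwβB ⊢
        · -- β = p
          rw [if_neg (by rw [npp]; norm_num)]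
          refine Finset.mem_filter.mpr ⟨Finset.mem_filter.mpr
            ⟨(hC _).mpr ((L1 npp).mp hp), ?_⟩, hpU⟩
          exact (hC _).mpr ((L1 (by rw [nwnorm, npp])).mp hwβB)
        · -- β = q
          rw [if_pos nqq]
          refine Finset.mem_filter.mpr ⟨Finset.mem_filter.mpr ⟨?_, ?_⟩, U.add_mem hqU hqU⟩
          · have e2 : q + q = (2:ℕ) • q := (two_nsmul q).symm
            rw [e2]
            exact (hC _).mpr ((L2 nqq).mp hq)
          · have e1 : -(w (q + q)) = (2:ℕ) • (-(w q)) := by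
              rw [two_nsmul, map_add]; abel
            rw [e1]
            exact (hC _).mpr ((L2 (by rw [nwnorm, nqq])).mp hwβB)
        · -- β = p + q
          rw [if_pos npq1]
          refine Finset.mem_filter.mpr ⟨Finset.mem_filter.mpr ⟨?_, ?_⟩,
            U.add_mem (U.add_mem hpU hqU) (U.add_mem hpU hqU)⟩
          · have e2 : p + q + (p + q) = (2:ℕ) • (p + q) := (two_nsmul _).symm
            rw [e2]
            exact (hC _).mpr ((L2 npq1).mp hpq)
          · have e1 : -(w (p + q + (p + q))) = (2:ℕ) • (-(w (p + q))) := by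
              rw [two_nsmul, map_add]; abel
            rw [e1]
            exact (hC _).mpr ((L2 (by rw [nwnorm, npq1])).mp hwβB)
        · -- β = p + 2 • q
          rw [if_neg (by rw [np2q2]; norm_num)]
          refine Finset.mem_filter.mpr ⟨Finset.mem_filter.mpr
            ⟨(hC _).mpr ((L1 np2q2).mp hp2q), ?_⟩, hp2qU⟩
          exact (hC _).mpr ((L1 (by rw [nwnorm, np2q2])).mp hwβB)
    rw [himg, Finset.card_image_of_injOn, hcard]
    intro x hx y hy hxy
    have hxB : x ∈ typeBPos n :=
      (hB _).mp (Finset.mem_filter.mp (Finset.mem_filter.mp hx).1).1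
    have hyB : y ∈ typeBPos n :=
      (hB _).mp (Finset.mem_filter.mp (Finset.mem_filter.mp hy).1).1
    exact f_inj hxB hyB hxy

lemma A3_transfer {n : ℕ} (ΦB ΦC : RootSys n)
    (hBpos : (ΦB.pos : Set (Esp n)) = typeBPos n)
    (hCpos : (ΦC.pos : Set (Esp n)) = typeCPos n)
    (w : Esp n ≃ₗᵢ[ℝ] Esp n)
    (h : ΦB.ContainsA3Pattern w) : ΦC.ContainsA3Pattern w := by
  obtain ⟨U, a, b, c, hind, hfil, hinv⟩ := h
  have hB : ∀ v : Esp n, v ∈ ΦB.pos ↔ v ∈ typeBPos n := fun v => by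
    rw [← Finset.mem_coe, hBpos]
  have hC : ∀ v : Esp n, v ∈ ΦC.pos ↔ v ∈ typeCPos n := fun v => by
    rw [← Finset.mem_coe, hCpos]
  have hmem : ∀ v : Esp n, v ∈ ΦB.pos ∧ v ∈ U ↔
      (v = a ∨ v = b ∨ v = c ∨ v = a + b ∨ v = b + c ∨ v = a + b + c) := by
    intro v
    constructor
    · rintro ⟨h1, h2⟩
      have hv : v ∈ ΦB.pos.filter (fun β => β ∈ U) := Finset.mem_filter.mpr ⟨h1, h2⟩
      rw [hfil] at hv
      simpa using hv
    · intro hv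
      have hv' : v ∈ ΦB.pos.filter (fun β => β ∈ U) := by rw [hfil]; simpa using hv
      exact ⟨(Finset.mem_filter.mp hv').1, (Finset.mem_filter.mp hv').2⟩
  have hz3 : ∀ α β γ : ℝ, α • a + β • b + γ • c = 0 → α = 0 ∧ β = 0 ∧ γ = 0 := by
    intro α β γ h0
    have h1 := Fintype.linearIndependent_iff.mp hind ![α, β, γ]
      (by simpa [Fin.sum_univ_three] using h0)
    exact ⟨h1 0, h1 1, h1 2⟩
  have hK : ∀ α β γ : ℝ, α • a + β • b + γ • c = 0 → ¬(α = 0 ∧ β = 0 ∧ γ = 0) → False :=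
    fun α β γ h0 hn => hn (hz3 α β γ h0)
  obtain ⟨haB, haU⟩ := (hmem a).mpr (Or.inl rfl)
  obtain ⟨hbB, hbU⟩ := (hmem b).mpr (Or.inr (Or.inl rfl))
  obtain ⟨hcB, hcU⟩ := (hmem c).mpr (Or.inr (Or.inr (Or.inl rfl)))
  obtain ⟨habB, habU⟩ := (hmem _).mpr (Or.inr (Or.inr (Or.inr (Or.inl rfl))))
  obtain ⟨hbcB, hbcU⟩ := (hmem _).mpr (Or.inr (Or.inr (Or.inr (Or.inr (Or.inl rfl)))))
  obtain ⟨habcB, habcU⟩ := (hmem _).mpr (Or.inr (Or.inr (Or.inr (Or.inr (Or.inr rfl)))))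
  have ha : a ∈ typeBPos n := (hB _).mp haB
  have hb : b ∈ typeBPos n := (hB _).mp hbB
  have hc : c ∈ typeBPos n := (hB _).mp hcB
  have hab : a + b ∈ typeBPos n := (hB _).mp habB
  have hbc : b + c ∈ typeBPos n := (hB _).mp hbcB
  have habc : a + b + c ∈ typeBPos n := (hB _).mp habcB
  have key : ∀ d : Esp n, d ∈ typeBPos n → d ∈ U →
      (d = a ∨ d = b ∨ d = c ∨ d = a + b ∨ d = b + c ∨ d = a + b + c) :=
    fun d hd1 hd2 => (hmem d).mp ⟨(hB d).mpr hd1, hd2⟩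
  obtain ⟨X, hX⟩ := exists_int_inner ha ha
  obtain ⟨Y, hY⟩ := exists_int_inner hb hb
  obtain ⟨Z, hZ⟩ := exists_int_inner hc hc
  obtain ⟨S, hS⟩ := exists_int_inner ha hb
  obtain ⟨T, hT⟩ := exists_int_inner hb hc
  obtain ⟨W, hW⟩ := exists_int_inner ha hc
  have hxd : X = 1 ∨ X = 2 := by
    rcases normB ha with h1 | h1
    · left; exact_mod_cast hX ▸ h1
    · right; exact_mod_cast hX ▸ h1
  have hyd : Y = 1 ∨ Y = 2 := by
    rcases normB hb with h1 | h1
    · left; exact_mod_cast hY ▸ h1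
    · right; exact_mod_cast hY ▸ h1
  have hzd : Z = 1 ∨ Z = 2 := by
    rcases normB hc with h1 | h1
    · left; exact_mod_cast hZ ▸ h1
    · right; exact_mod_cast hZ ▸ h1
  have eNab : (inner ℝ (a + b) (a + b) : ℝ) = (X : ℝ) + 2 * S + Y := by
    rw [real_inner_add_add_self, hX, hS, hY]
  have eNbc : (inner ℝ (b + c) (b + c) : ℝ) = (Y : ℝ) + 2 * T + Z := by
    rw [real_inner_add_add_self, hY, hT, hZ]
  have eNabc : (inner ℝ (a + b + c) (a + b + c) : ℝ)
      = (X : ℝ) + 2 * S + Y + 2 * ((W : ℝ) + T) + Z := by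
    rw [real_inner_add_add_self, eNab, inner_add_left, hW, hT, hZ]
  have iab : X + Y + 2 * S = 1 ∨ X + Y + 2 * S = 2 := by
    rcases normB hab with h1 | h1 <;> rw [eNab] at h1
    · left; have h2 : (X : ℝ) + Y + 2 * S = 1 := by linarith
      exact_mod_cast h2
    · right; have h2 : (X : ℝ) + Y + 2 * S = 2 := by linarith
      exact_mod_cast h2
  have ibc : Y + Z + 2 * T = 1 ∨ Y + Z + 2 * T = 2 := by
    rcases normB hbc with h1 | h1 <;> rw [eNbc] at h1
    · left; have h2 : (Y : ℝ) + Z + 2 * T = 1 := by linarith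
      exact_mod_cast h2
    · right; have h2 : (Y : ℝ) + Z + 2 * T = 2 := by linarith
      exact_mod_cast h2
  have iabc : X + Y + Z + 2 * (S + T + W) = 1 ∨ X + Y + Z + 2 * (S + T + W) = 2 := by
    rcases normB habc with h1 | h1 <;> rw [eNabc] at h1
    · left; have h2 : (X : ℝ) + Y + Z + 2 * ((S : ℝ) + T + W) = 1 := by linarith
      exact_mod_cast h2
    · right; have h2 : (X : ℝ) + Y + Z + 2 * ((S : ℝ) + T + W) = 2 := by linarith
      exact_mod_cast h2
  have cs1 : S * S < X * Y := by
    have hcs := strictCS (v := a) (w := b) (fun α β h0 => by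
      have h1 := hz3 α β 0 (by rw [zero_smul, add_zero]; exact h0)
      exact ⟨h1.1, h1.2.1⟩)
    rw [hX, hS, hY, sq] at hcs
    exact_mod_cast hcs
  have cs2 : T * T < Y * Z := by
    have hcs := strictCS (v := b) (w := c) (fun α β h0 => by
      have h1 := hz3 0 α β (by rw [zero_smul, zero_add]; exact h0)
      exact ⟨h1.2.1, h1.2.2⟩)
    rw [hY, hT, hZ, sq] at hcs
    exact_mod_cast hcs
  have cs3 : W * W < X * Z := by
    have hcs := strictCS (v := a) (w := c) (fun α β h0 => by
      have h1 := hz3 α 0 β (by rw [zero_smul, add_zero]; exact h0)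
      exact ⟨h1.1, h1.2.2⟩)
    rw [hX, hW, hZ, sq] at hcs
    exact_mod_cast hcs
  rcases numericZ3 X Y Z S T W hxd hyd hzd iab ibc iabc cs1 cs2 cs3 with
    ⟨h1, h2, h3, h4, h5, h6⟩ | ⟨h1, h2⟩ | ⟨h1, h2⟩ | ⟨h1, h2⟩ | ⟨h1, h2⟩ | ⟨h1, h2⟩
  · -- good case: all norms are 2
    have naa : (inner ℝ a a : ℝ) = 2 := by rw [hX, h1]; norm_num
    have nbb : (inner ℝ b b : ℝ) = 2 := by rw [hY, h2]; norm_num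
    have ncc : (inner ℝ c c : ℝ) = 2 := by rw [hZ, h3]; norm_num
    have nab2 : (inner ℝ (a + b) (a + b) : ℝ) = 2 := by
      rw [eNab]
      have h4' : (X : ℝ) + Y + 2 * S = 2 := by exact_mod_cast h4
      linarith
    have nbc2 : (inner ℝ (b + c) (b + c) : ℝ) = 2 := by
      rw [eNbc]
      have h5' : (Y : ℝ) + Z + 2 * T = 2 := by exact_mod_cast h5
      linarith
    have nabc2 : (inner ℝ (a + b + c) (a + b + c) : ℝ) = 2 := by
      rw [eNabc]
      have h6' : (X : ℝ) + Y + Z + 2 * ((S : ℝ) + T + W) = 2 := by exact_mod_cast h6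
      linarith
    have hnorm6 : ∀ v : Esp n,
        (v = a ∨ v = b ∨ v = c ∨ v = a + b ∨ v = b + c ∨ v = a + b + c) →
        (inner ℝ v v : ℝ) = 2 := by
      rintro v (hv | hv | hv | hv | hv | hv) <;> rw [hv]
      exacts [naa, nbb, ncc, nab2, nbc2, nabc2]
    have nwnorm : ∀ v : Esp n, (inner ℝ (-(w v)) (-(w v)) : ℝ) = (inner ℝ v v : ℝ) := by
      intro v
      rw [inner_neg_neg, LinearIsometryEquiv.inner_map_map]
    have hCfil : ΦC.pos.filter (fun β => β ∈ U) =
        ({a, b, c, a + b, b + c, a + b + c} : Finset (Esp n)) := by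
      apply Finset.ext
      intro v
      simp only [Finset.mem_filter, Finset.mem_insert, Finset.mem_singleton]
      constructor
      · rintro ⟨hvC, hvU⟩
        rcases C_cases ((hC v).mp hvC) with ⟨h2', hvB⟩ | ⟨h4', i, hvi⟩
        · exact (hmem v).mp ⟨(hB v).mpr hvB, hvU⟩
        · exfalso
          have hv2 : v = (2:ℝ) • stdB n i := by rw [hvi, two_nsmul]; module
          have hiU : stdB n i ∈ U := by
            have hmm := U.smul_mem ((2:ℝ)⁻¹) hvU
            rw [hv2, smul_smul] at hmm
            norm_num at hmm
            exact hmm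
          have hiB : stdB n i ∈ ΦB.pos := (hB _).mpr (Or.inr ⟨i, rfl⟩)
          have hni : (inner ℝ (stdB n i) (stdB n i) : ℝ) = 1 := by rw [inner_stdB, if_pos rfl]
          have := hnorm6 _ ((hmem _).mp ⟨hiB, hiU⟩)
          rw [hni] at this
          norm_num at this
      · intro hv
        have nv := hnorm6 v hv
        refine ⟨(hC _).mpr ((L1 nv).mp ?_), ((hmem v).mpr hv).2⟩
        exact (hB _).mp ((hmem v).mpr hv).1
    have hIfil : (ΦC.invSet w).filter (fun β => β ∈ U)
        = (ΦB.invSet w).filter (fun β => β ∈ U) := by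
      apply Finset.ext
      intro v
      constructor
      · intro hvF
        obtain ⟨hvI, hvU⟩ := Finset.mem_filter.mp hvF
        obtain ⟨hvC, hwv⟩ := Finset.mem_filter.mp hvI
        have hv6 : v = a ∨ v = b ∨ v = c ∨ v = a + b ∨ v = b + c ∨ v = a + b + c := by
          have hvm : v ∈ ΦC.pos.filter (fun β => β ∈ U) := Finset.mem_filter.mpr ⟨hvC, hvU⟩
          rw [hCfil] at hvm
          simpa using hvm
        have nv := hnorm6 v hv6
        refine Finset.mem_filter.mpr ⟨Finset.mem_filter.mpr ⟨((hmem v).mpr hv6).1, ?_⟩, hvU⟩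
        exact (hB _).mpr ((L1 (by rw [nwnorm]; exact nv)).mpr ((hC _).mp hwv))
      · intro hvF
        obtain ⟨hvI, hvU⟩ := Finset.mem_filter.mp hvF
        obtain ⟨hvB, hwv⟩ := Finset.mem_filter.mp hvI
        have hv6 := (hmem v).mp ⟨hvB, hvU⟩
        have nv := hnorm6 v hv6
        refine Finset.mem_filter.mpr ⟨Finset.mem_filter.mpr ⟨(hC _).mpr ((L1 nv).mp ((hB _).mp hvB)), ?_⟩, hvU⟩
        exact (hC _).mpr ((L1 (by rw [nwnorm]; exact nv)).mp ((hB _).mp hwv))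
    refine ⟨U, a, b, c, hind, hCfil, ?_⟩
    rw [hIfil]
    exact hinv
  · -- bad: a, b short
    exfalso
    have na1 : (inner ℝ a a : ℝ) = 1 := by rw [hX, h1]; norm_num
    have nb1 : (inner ℝ b b : ℝ) = 1 := by rw [hY, h2]; norm_num
    have hne : a ≠ b := fun he => hK 1 (-1) 0 (by linear_combination (norm := module) he) (by norm_num)
    obtain ⟨-, hd0⟩ := SP ha hb na1 nb1 hne
    rcases hd0 with hd | hd
    · rcases key _ hd (U.sub_mem haU hbU) with he | he | he | he | he | he
      · exact hK 0 (-1) 0 (by linear_combination (norm := module) he) (by norm_num)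
      · exact hK 1 (-2) 0 (by linear_combination (norm := module) he) (by norm_num)
      · exact hK 1 (-1) (-1) (by linear_combination (norm := module) he) (by norm_num)
      · exact hK 0 (-2) 0 (by linear_combination (norm := module) he) (by norm_num)
      · exact hK 1 (-2) (-1) (by linear_combination (norm := module) he) (by norm_num)
      · exact hK 0 (-2) (-1) (by linear_combination (norm := module) he) (by norm_num)
    · rcases key _ hd (U.sub_mem hbU haU) with he | he | he | he | he | he
      · exact hK (-2) 1 0 (by linear_combination (norm := module) he) (by norm_num)
      · exact hK (-1) 0 0 (by linear_combination (norm := module) he) (by norm_num)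
      · exact hK (-1) 1 (-1) (by linear_combination (norm := module) he) (by norm_num)
      · exact hK (-2) 0 0 (by linear_combination (norm := module) he) (by norm_num)
      · exact hK (-1) 0 (-1) (by linear_combination (norm := module) he) (by norm_num)
      · exact hK (-2) 0 (-1) (by linear_combination (norm := module) he) (by norm_num)
  · -- bad: a, a+b short
    exfalso
    have na1 : (inner ℝ a a : ℝ) = 1 := by rw [hX, h1]; norm_num
    have nab1 : (inner ℝ (a + b) (a + b) : ℝ) = 1 := by
      rw [eNab]
      have h2' : (X : ℝ) + Y + 2 * S = 1 := by exact_mod_cast h2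
      linarith
    have hne : a ≠ a + b := fun he => hK 0 (-1) 0 (by linear_combination (norm := module) he) (by norm_num)
    obtain ⟨hs0, -⟩ := SP ha hab na1 nab1 hne
    rcases key _ hs0 (U.add_mem haU habU) with he | he | he | he | he | he
    · exact hK 1 1 0 (by linear_combination (norm := module) he) (by norm_num)
    · exact hK 2 0 0 (by linear_combination (norm := module) he) (by norm_num)
    · exact hK 2 1 (-1) (by linear_combination (norm := module) he) (by norm_num)
    · exact hK 1 0 0 (by linear_combination (norm := module) he) (by norm_num)
    · exact hK 2 0 (-1) (by linear_combination (norm := module) he) (by norm_num)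
    · exact hK 1 0 (-1) (by linear_combination (norm := module) he) (by norm_num)
  · -- bad: b, c short
    exfalso
    have nb1 : (inner ℝ b b : ℝ) = 1 := by rw [hY, h1]; norm_num
    have nc1 : (inner ℝ c c : ℝ) = 1 := by rw [hZ, h2]; norm_num
    have hne : b ≠ c := fun he => hK 0 1 (-1) (by linear_combination (norm := module) he) (by norm_num)
    obtain ⟨-, hd0⟩ := SP hb hc nb1 nc1 hne
    rcases hd0 with hd | hd
    · rcases key _ hd (U.sub_mem hbU hcU) with he | he | he | he | he | he
      · exact hK (-1) 1 (-1) (by linear_combination (norm := module) he) (by norm_num)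
      · exact hK 0 0 (-1) (by linear_combination (norm := module) he) (by norm_num)
      · exact hK 0 1 (-2) (by linear_combination (norm := module) he) (by norm_num)
      · exact hK (-1) 0 (-1) (by linear_combination (norm := module) he) (by norm_num)
      · exact hK 0 0 (-2) (by linear_combination (norm := module) he) (by norm_num)
      · exact hK (-1) 0 (-2) (by linear_combination (norm := module) he) (by norm_num)
    · rcases key _ hd (U.sub_mem hcU hbU) with he | he | he | he | he | he
      · exact hK (-1) (-1) 1 (by linear_combination (norm := module) he) (by norm_num)
      · exact hK 0 (-2) 1 (by linear_combination (norm := module) he) (by norm_num)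
      · exact hK 0 (-1) 0 (by linear_combination (norm := module) he) (by norm_num)
      · exact hK (-1) (-2) 1 (by linear_combination (norm := module) he) (by norm_num)
      · exact hK 0 (-2) 0 (by linear_combination (norm := module) he) (by norm_num)
      · exact hK (-1) (-2) 0 (by linear_combination (norm := module) he) (by norm_num)
  · -- bad: b, a+b short
    exfalso
    have nb1 : (inner ℝ b b : ℝ) = 1 := by rw [hY, h1]; norm_num
    have nab1 : (inner ℝ (a + b) (a + b) : ℝ) = 1 := by
      rw [eNab]
      have h2' : (X : ℝ) + Y + 2 * S = 1 := by exact_mod_cast h2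
      linarith
    have hne : b ≠ a + b := fun he => hK (-1) 0 0 (by linear_combination (norm := module) he) (by norm_num)
    obtain ⟨hs0, -⟩ := SP hb hab nb1 nab1 hne
    rcases key _ hs0 (U.add_mem hbU habU) with he | he | he | he | he | he
    · exact hK 0 2 0 (by linear_combination (norm := module) he) (by norm_num)
    · exact hK 1 1 0 (by linear_combination (norm := module) he) (by norm_num)
    · exact hK 1 2 (-1) (by linear_combination (norm := module) he) (by norm_num)
    · exact hK 0 1 0 (by linear_combination (norm := module) he) (by norm_num)
    · exact hK 1 1 (-1) (by linear_combination (norm := module) he) (by norm_num)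
    · exact hK 0 1 (-1) (by linear_combination (norm := module) he) (by norm_num)
  · -- bad: c, b+c short
    exfalso
    have nc1 : (inner ℝ c c : ℝ) = 1 := by rw [hZ, h1]; norm_num
    have nbc1 : (inner ℝ (b + c) (b + c) : ℝ) = 1 := by
      rw [eNbc]
      have h2' : (Y : ℝ) + Z + 2 * T = 1 := by exact_mod_cast h2
      linarith
    have hne : c ≠ b + c := fun he => hK 0 (-1) 0 (by linear_combination (norm := module) he) (by norm_num)
    obtain ⟨hs0, -⟩ := SP hc hbc nc1 nbc1 hne
    rcases key _ hs0 (U.add_mem hcU hbcU) with he | he | he | he | he | he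
    · exact hK (-1) 1 2 (by linear_combination (norm := module) he) (by norm_num)
    · exact hK 0 0 2 (by linear_combination (norm := module) he) (by norm_num)
    · exact hK 0 1 1 (by linear_combination (norm := module) he) (by norm_num)
    · exact hK (-1) 0 2 (by linear_combination (norm := module) he) (by norm_num)
    · exact hK 0 0 1 (by linear_combination (norm := module) he) (by norm_num)
    · exact hK (-1) 0 1 (by linear_combination (norm := module) he) (by norm_num)
/-- **Lemma.** Let `Φ_B` and `Φ_C` be the root systems of types `Bₙ` and `Cₙ`
realized in the same space `ℝⁿ` (so that their Weyl groups coincide).  If `(w, Φ_C)`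
avoids the type `A₃` patterns `3142`, `2413` and the two type `B₂` patterns of
length two, then `(w, Φ_B)` also avoids these patterns. -/
theorem typeC_avoids_implies_typeB_avoids {n : ℕ} (ΦB ΦC : RootSys n)
    (hBpos : (ΦB.pos : Set (Esp n)) = typeBPos n)
    (hBroots : (ΦB.roots : Set (Esp n)) = (ΦB.pos : Set (Esp n)) ∪ (-(ΦB.pos : Set (Esp n))))
    (hCpos : (ΦC.pos : Set (Esp n)) = typeCPos n)
    (hCroots : (ΦC.roots : Set (Esp n)) = (ΦC.pos : Set (Esp n)) ∪ (-(ΦC.pos : Set (Esp n))))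
    (w : Esp n ≃ₗᵢ[ℝ] Esp n) (hw : w ∈ ΦC.weylGroup)
    (hA3 : ¬ ΦC.ContainsA3Pattern w) (hB2 : ¬ ΦC.ContainsB2Pattern w) :
    ¬ ΦB.ContainsA3Pattern w ∧ ¬ ΦB.ContainsB2Pattern w := by
  constructor
  · intro h
    exact hA3 (A3_transfer ΦB ΦC hBpos hCpos w h)
  · intro h
    exact hB2 (B2_transfer ΦB ΦC hBpos hCpos w h)
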